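/- Let A be an n×n normal matrix with orthonormal eigenbasis v₁,…,vₙ and eigenvalues λ₁,…,λₙ. Then for each i, adj(λ_i·I_n − A) = (∏_{k≠i} (λ_i − λ_k)) · v_i v_i*, i.e., the adjugate of λ_i·I − A is a scalar multiple of the rank-one projection onto v_i. -/

import Mathlib

open Matrix


/-- The adjugate of `λᵢ I - A` is a scalar multiple of the rank one projection `vᵢ vᵢ*`. -/
theorem adjugate_eigenvalue_sub_eq_smul_proj {n : ℕ}
    (A : Matrix (Fin n) (Fin n) ℂ)
    (lam : Fin n → ℂ) (v : Fin n → Fin n → ℂ)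
    (horth : ∀ i k, dotProduct (star (v i)) (v k) = if i = k then 1 else 0)
    (hdiag : A = ∑ i, lam i • Matrix.vecMulVec (v i) (star (v i)))
    (i : Fin n) :
    (lam i • (1 : Matrix (Fin n) (Fin n) ℂ) - A).adjugate
      = (∏ k ∈ Finset.univ.erase i, (lam i - lam k)) •
        Matrix.vecMulVec (v i) (star (v i)) := by
  classical
  set U : Matrix (Fin n) (Fin n) ℂ := Matrix.of fun j k => v k j with hU
  have hUU : Uᴴ * U = 1 := by
    ext j k
    have := horth j k
    simpa [Matrix.mul_apply, Matrix.conjTranspose_apply, dotProduct, hU,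
      Matrix.one_apply] using this
  have hUU' : U * Uᴴ = 1 := mul_eq_one_comm.mp hUU
  have hconj : ∀ d : Fin n → ℂ,
      U * Matrix.diagonal d * Uᴴ = ∑ m, d m • Matrix.vecMulVec (v m) (star (v m)) := by
    intro d
    rw [Matrix.mul_assoc]
    ext j k
    simp only [Matrix.mul_apply, Matrix.diagonal_mul, Matrix.conjTranspose_apply,
      Matrix.sum_apply, Matrix.smul_apply, Matrix.vecMulVec_apply, hU, Matrix.of_apply,
      Pi.star_apply, smul_eq_mul, Matrix.diagonal_apply, ite_mul, zero_mul, mul_ite, mul_zero,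
      Finset.sum_ite_eq, Finset.sum_ite_eq', Finset.mem_univ, if_true]
    exact Finset.sum_congr rfl fun m _ => by ring
  have hA : A = U * Matrix.diagonal lam * Uᴴ := by rw [hconj]; exact hdiag
  have key : lam i • (1 : Matrix (Fin n) (Fin n) ℂ) - A
      = U * Matrix.diagonal (fun k => lam i - lam k) * Uᴴ := by
    have h1 : Matrix.diagonal (fun k => lam i - lam k)
        = lam i • (1 : Matrix (Fin n) (Fin n) ℂ) - Matrix.diagonal lam := by
      ext j k
      by_cases h : j = k <;> simp [Matrix.one_apply, h]
    rw [h1, Matrix.mul_sub, Matrix.sub_mul, Matrix.mul_smul, Matrix.smul_mul, Matrix.mul_one,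
      hUU', ← hA]
  have hadjU : U.adjugate = U.det • Uᴴ := by
    calc U.adjugate = Uᴴ * (U * U.adjugate) := by
          rw [← Matrix.mul_assoc, hUU, Matrix.one_mul]
      _ = U.det • Uᴴ := by rw [Matrix.mul_adjugate, Matrix.mul_smul, Matrix.mul_one]
  have hadjUH : Uᴴ.adjugate = Uᴴ.det • U := by
    calc Uᴴ.adjugate = U * (Uᴴ * Uᴴ.adjugate) := by
          rw [← Matrix.mul_assoc, hUU', Matrix.one_mul]
      _ = Uᴴ.det • U := by rw [Matrix.mul_adjugate, Matrix.mul_smul, Matrix.mul_one]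
  have hdet1 : U.det * Uᴴ.det = 1 := by
    have := congrArg Matrix.det hUU'
    simpa [Matrix.det_mul] using this
  rw [key, Matrix.adjugate_mul_distrib, Matrix.adjugate_mul_distrib, Matrix.adjugate_diagonal,
    hadjU, hadjUH, Matrix.mul_smul, Matrix.mul_smul, Matrix.smul_mul, smul_smul, hdet1, one_smul,
    ← Matrix.mul_assoc, hconj]
  rw [Finset.sum_eq_single i (fun m _ hm => by
      have h0 : (∏ j ∈ Finset.univ.erase m, (lam i - lam j)) = 0 :=
        Finset.prod_eq_zero (Finset.mem_erase.mpr ⟨fun h => hm h.symm, Finset.mem_univ i⟩)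
          (sub_self (lam i))
      rw [h0, zero_smul])
    (fun h => absurd (Finset.mem_univ i) h)]
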